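/- arXiv:2509.01745 — 3 statements merged into one kernel-verified Lean document; each statement's English description precedes it below -/
import Mathlib

section
/- Let $\Gamma$ be a compact metric space with Borel $\sigma$-algebra, $P$ a Feller transition kernel. For a probability measure $\nu$ on $\Gamma$, define the Donsker-Varadhan functional $I(\nu) = -\inf_{f \in \mathcal{U}} \int_\Gamma \log\bigl(\frac{\int_\Gamma f(y)P(x,dy)}{f(x)}\bigr)\nu(dx)$ where $\mathcal{U}$ is the set of positive continuous functions on $\Gamma$. If $\nu$ is an invariant measure of $P$ (i.e., $\int P(x,A)\,\nu(dx) = \nu(A)$ for all Borel $A$), then $I(\nu) = 0$. -/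
open MeasureTheory ProbabilityTheory

section Aux

variable {Γ : Type*} [MetricSpace Γ] [CompactSpace Γ] [MeasurableSpace Γ] [BorelSpace Γ]

lemma cont_integrable' {f : Γ → ℝ} (hf : Continuous f) (μ : Measure Γ) [IsFiniteMeasure μ] :
    Integrable f μ :=
  integrableOn_univ.mp (hf.continuousOn.integrableOn_compact isCompact_univ)

lemma nonempty_of_prob (ν : Measure Γ) [IsProbabilityMeasure ν] : Nonempty Γ := by
  by_contra hne
  rw [not_nonempty_iff] at hne
  have h1 : ν Set.univ = 1 := measure_univ
  rw [Set.univ_eq_empty_iff.mpr hne, measure_empty] at h1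
  simp at h1

lemma inv_integral_nonneg (P : Kernel Γ Γ) [IsMarkovKernel P] (ν : Measure Γ)
    [IsProbabilityMeasure ν]
    (hinv : ∀ A : Set Γ, MeasurableSet A → ∫⁻ x, P x A ∂ν = ν A)
    (h : Γ → ℝ) (hc : Continuous h) (h0 : ∀ y, 0 ≤ h y) :
    ∫ x, ∫ y, h y ∂ P x ∂ν = ∫ y, h y ∂ν := by
  have hΓ : Nonempty Γ := nonempty_of_prob ν
  have hm : Measurable h := hc.measurable
  have hbind : ν.bind (fun x => (P x : Measure Γ)) = ν :=
    Measure.ext fun A hA => by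
      rw [Measure.bind_apply hA P.measurable.aemeasurable]; exact hinv A hA
  obtain ⟨x1, -, hx1⟩ := isCompact_univ.exists_isMaxOn Set.univ_nonempty hc.continuousOn
  set g : Γ → ENNReal := fun y => ENNReal.ofReal (h y) with hgdef
  have hgm : Measurable g := hm.ennreal_ofReal
  have hfin : ∀ x : Γ, ∫⁻ y, g y ∂ P x ≤ ENNReal.ofReal (h x1) := fun x => by
    calc ∫⁻ y, g y ∂ P x ≤ ∫⁻ _, ENNReal.ofReal (h x1) ∂ P x :=
          lintegral_mono fun y => ENNReal.ofReal_le_ofReal (hx1 (Set.mem_univ y))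
      _ = ENNReal.ofReal (h x1) := by simp
  have hinner : ∀ x : Γ, ∫ y, h y ∂ P x = (∫⁻ y, g y ∂ P x).toReal := fun x =>
    integral_eq_lintegral_of_nonneg_ae (ae_of_all _ h0) hm.aestronglyMeasurable
  have hFm : Measurable fun x => ∫⁻ y, g y ∂ P x := hgm.lintegral_kernel
  calc ∫ x, ∫ y, h y ∂ P x ∂ν = ∫ x, (∫⁻ y, g y ∂ P x).toReal ∂ν := by simp_rw [hinner]
    _ = (∫⁻ x, ∫⁻ y, g y ∂ P x ∂ν).toReal :=
        integral_toReal hFm.aemeasurable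
          (ae_of_all _ fun x => lt_of_le_of_lt (hfin x) ENNReal.ofReal_lt_top)
    _ = (∫⁻ y, g y ∂ν).toReal := by
        rw [← Measure.lintegral_bind P.measurable.aemeasurable hgm.aemeasurable, hbind]
    _ = ∫ y, h y ∂ν :=
        (integral_eq_lintegral_of_nonneg_ae (ae_of_all _ h0) hm.aestronglyMeasurable).symm

lemma inv_integral (P : Kernel Γ Γ) [IsMarkovKernel P] (ν : Measure Γ)
    [IsProbabilityMeasure ν]
    (hinv : ∀ A : Set Γ, MeasurableSet A → ∫⁻ x, P x A ∂ν = ν A)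
    (h : Γ → ℝ) (hc : Continuous h)
    (hco : Continuous fun x => ∫ y, h y ∂ P x) :
    ∫ x, ∫ y, h y ∂ P x ∂ν = ∫ y, h y ∂ν := by
  have hΓ : Nonempty Γ := nonempty_of_prob ν
  obtain ⟨x0, -, hx0⟩ := isCompact_univ.exists_isMinOn Set.univ_nonempty hc.continuousOn
  set c : ℝ := h x0 with hcdef
  have key := inv_integral_nonneg P ν hinv (fun y => h y - c) (hc.sub continuous_const)
    (fun y => sub_nonneg.mpr (hx0 (Set.mem_univ y)))
  have h1 : ∀ x : Γ, ∫ y, (h y - c) ∂ P x = (∫ y, h y ∂ P x) - c := fun x => by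
    rw [integral_sub (cont_integrable' hc _) (integrable_const c), integral_const]
    simp
  have h2 : ∫ y, (h y - c) ∂ν = (∫ y, h y ∂ν) - c := by
    rw [integral_sub (cont_integrable' hc _) (integrable_const c), integral_const]
    simp
  have h3 : ∫ x, ((∫ y, h y ∂ P x) - c) ∂ν = (∫ x, ∫ y, h y ∂ P x ∂ν) - c := by
    rw [integral_sub (cont_integrable' hco _) (integrable_const c), integral_const]
    simp
  simp_rw [h1, h2, h3] at key
  linarith

end Aux

/-- The Donsker-Varadhan action functional
`I(ν) = - inf { ∫ log (P f (x) / f(x)) ν(dx) : f positive continuous }`. -/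
noncomputable def dvRate {Γ : Type*} [MeasurableSpace Γ] [TopologicalSpace Γ]
    (P : Kernel Γ Γ) (ν : Measure Γ) : ℝ :=
  - ⨅ f : {f : Γ → ℝ // Continuous f ∧ ∀ x, 0 < f x},
      ∫ x, Real.log ((∫ y, f.1 y ∂ P x) / f.1 x) ∂ν

/-- for a Feller Markov kernel `P` on a compact metric space, the
Donsker-Varadhan functional `I` vanishes at every invariant probability
measure `ν` of `P`. -/
theorem stmt_12 {Γ : Type*} [MetricSpace Γ] [CompactSpace Γ]
    [MeasurableSpace Γ] [BorelSpace Γ]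
    (P : Kernel Γ Γ) [IsMarkovKernel P]
    (hFeller : ∀ f : Γ → ℝ, Continuous f → Continuous (fun x => ∫ y, f y ∂ P x))
    (ν : Measure Γ) [IsProbabilityMeasure ν]
    (hinv : ∀ A : Set Γ, MeasurableSet A → ∫⁻ x, P x A ∂ν = ν A) :
    dvRate P ν = 0 := by
  have hΓ : Nonempty Γ := nonempty_of_prob ν
  set S := {f : Γ → ℝ // Continuous f ∧ ∀ x, 0 < f x} with hS
  set J : S → ℝ := fun f => ∫ x, Real.log ((∫ y, f.1 y ∂ P x) / f.1 x) ∂ν with hJ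
  -- the lower bound: each term is nonnegative
  have hlb : ∀ f : S, 0 ≤ J f := by
    rintro ⟨g, hcg, hpos⟩
    obtain ⟨xa, -, hxa⟩ := isCompact_univ.exists_isMinOn Set.univ_nonempty hcg.continuousOn
    obtain ⟨xb, -, hxb⟩ := isCompact_univ.exists_isMaxOn Set.univ_nonempty hcg.continuousOn
    set a : ℝ := g xa with hadef
    set b : ℝ := g xb with hbdef
    have ha : 0 < a := hpos xa
    have hrange : ∀ y : Γ, g y ∈ Set.Icc a b := fun y =>
      ⟨hxa (Set.mem_univ y), hxb (Set.mem_univ y)⟩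
    -- integral of g wrt each P x is positive
    have hPg_pos : ∀ x : Γ, 0 < ∫ y, g y ∂ P x := fun x => by
      have : a ≤ ∫ y, g y ∂ P x := by
        calc a = ∫ _, a ∂ P x := by simp
          _ ≤ ∫ y, g y ∂ P x :=
            integral_mono (integrable_const a) (cont_integrable' hcg _)
              (fun y => hxa (Set.mem_univ y))
      linarith
    have hlogg : Continuous fun y => Real.log (g y) :=
      Continuous.log hcg fun y => (hpos y).ne'
    -- Jensen's inequality pointwise
    have hJensen : ∀ x : Γ,
        ∫ y, Real.log (g y) ∂ P x ≤ Real.log (∫ y, g y ∂ P x) := fun x => by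
      have hconc : ConcaveOn ℝ (Set.Icc a b) Real.log :=
        (strictConcaveOn_log_Ioi.concaveOn).subset
          (fun t ht => lt_of_lt_of_le ha ht.1) (convex_Icc a b)
      have hconton : ContinuousOn Real.log (Set.Icc a b) :=
        Real.continuousOn_log.mono fun t ht =>
          Set.mem_compl_singleton_iff.mpr (ne_of_gt (lt_of_lt_of_le ha ht.1))
      exact hconc.le_map_integral hconton isClosed_Icc
        (ae_of_all _ fun y => hrange y) (cont_integrable' hcg _)
        (cont_integrable' hlogg _)
    -- rewrite the integrand as a difference
    have hrw : ∀ x : Γ, Real.log ((∫ y, g y ∂ P x) / g x)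
        = Real.log (∫ y, g y ∂ P x) - Real.log (g x) := fun x =>
      Real.log_div (hPg_pos x).ne' (hpos x).ne'
    set F : Γ → ℝ := fun x => Real.log (∫ y, g y ∂ P x) with hFdef
    have hFc : Continuous F := Continuous.log (hFeller g hcg) fun x => (hPg_pos x).ne'
    have hGc : Continuous fun x => Real.log (g x) := hlogg
    have hPlogc : Continuous fun x => ∫ y, Real.log (g y) ∂ P x := hFeller _ hlogg
    have hinvlog : ∫ x, ∫ y, Real.log (g y) ∂ P x ∂ν = ∫ x, Real.log (g x) ∂ν :=
      inv_integral P ν hinv _ hlogg hPlogc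
    have hmono : ∫ x, ∫ y, Real.log (g y) ∂ P x ∂ν ≤ ∫ x, F x ∂ν :=
      integral_mono (cont_integrable' hPlogc _) (cont_integrable' hFc _) hJensen
    have : J ⟨g, hcg, hpos⟩
        = ∫ x, F x ∂ν - ∫ x, Real.log (g x) ∂ν := by
      simp only [hJ]
      simp_rw [hrw]
      exact integral_sub (cont_integrable' hFc _) (cont_integrable' hGc _)
    rw [this, ← hinvlog]
    linarith
  -- the upper bound: f ≡ 1 gives value 0
  set one : S := ⟨fun _ => (1 : ℝ), continuous_const, fun _ => one_pos⟩ with hone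
  have hJone : J one = 0 := by
    simp [hJ, hone]
  have : Nonempty S := ⟨one⟩
  have hbdd : BddBelow (Set.range J) := ⟨0, by rintro _ ⟨f, rfl⟩; exact hlb f⟩
  have hinf : ⨅ f : S, J f = 0 :=
    le_antisymm ((ciInf_le hbdd one).trans_eq hJone) (le_ciInf hlb)
  rw [dvRate]
  rw [show (⨅ f : S, ∫ x, Real.log ((∫ y, f.1 y ∂ P x) / f.1 x) ∂ν) = ⨅ f : S, J f from rfl,
    hinf]
  simp
end

section
/- Let $\Gamma = S^{\mathbb{Z}^d}$ with $S$ finite, let $P$ be a transition kernel satisfying PCA assumptions (A1)-(A4) and space-shift invariance (A5): $P(x,A) = P(\theta_m x, \theta_m A)$ for all shifts $\theta_m$, $m\in\mathbb{Z}^d$. Suppose $\nu$ is a space-shift invariant probability measure on $\Gamma$ (i.e., $\nu(A)=\nu(\theta_m A)$ for all $m$, $A$) and suppose the conclusion of Lemma 2.1 holds for $\nu$: with $\Phi_n = \{z\in\mathbb{Z}^d : \sum_i|z_i|\le n\}$ and $\nu^P(A)=\int P(x,A)\,d\nu$, one has $\lim_{n\to\infty}\sup_{A\in\mathcal{B}_{\Phi_n^*}}|\nu^P(A)-\nu(A)|=0$,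 where $\mathcal{B}_{\Phi_n^*}$ is generated by coordinates outside $\Phi_n$. Then $\nu^P = \nu$, i.e., $\nu$ is time-invariant for $P$. -/
open MeasureTheory ProbabilityTheory Filter
open scoped Classical

/-- The σ-algebra on the configuration space `W → S` generated by the
coordinates in `Ψ ⊆ W`. -/
def coordSigma {S W : Type*} [MeasurableSpace S] (Ψ : Set W) :
    MeasurableSpace (W → S) :=
  ⨆ z ∈ Ψ, MeasurableSpace.comap (fun x => x z) inferInstance

lemma measurable_coordSigma_precomp {S W : Type*} [MeasurableSpace S]
    {Ψ Ψ' : Set W} {f : W → W} (hf : ∀ z ∈ Ψ, f z ∈ Ψ') :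
    @Measurable _ _ (coordSigma Ψ') (coordSigma Ψ) (fun (x : W → S) z => x (f z)) := by
  rw [measurable_iff_comap_le]
  unfold coordSigma
  rw [MeasurableSpace.comap_iSup]
  refine iSup_le fun z => ?_
  rw [MeasurableSpace.comap_iSup]
  refine iSup_le fun hz => ?_
  rw [MeasurableSpace.comap_comp]
  exact le_iSup₂ (f := fun w (_ : w ∈ Ψ') =>
    MeasurableSpace.comap (fun x : W → S => x w) inferInstance) (f z) (hf z hz)

lemma cylinder_measurable_coordSigma {S W : Type*} [MeasurableSpace S]
    (s : Finset W) {Sset : Set (∀ _ : s, S)} (hS : MeasurableSet Sset) :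
    MeasurableSet[coordSigma (↑s : Set W)] (cylinder s Sset) := by
  have hmeas : @Measurable _ _ (coordSigma (↑s : Set W)) _
      (s.restrict (π := fun _ => S)) := by
    rw [measurable_iff_comap_le, MeasurableSpace.pi, MeasurableSpace.comap_iSup]
    refine iSup_le fun i => ?_
    rw [MeasurableSpace.comap_comp]
    exact le_iSup₂ (f := fun w (_ : w ∈ (↑s : Set W)) =>
      MeasurableSpace.comap (fun x : W → S => x w) inferInstance) (i : W) i.2
  exact hmeas hS

/-- Theorem 2 of the paper, reduced modulo Lemma 2.1: on
`Γ = S^{ℤ^d}`, for a PCA kernel satisfying (A1)-(A4) and space-shift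
invariance (A5), if `ν` is a space-shift invariant probability measure for
which the conclusion of Lemma 2.1 holds (with `Φ_n` the `ℓ¹`-balls), then
`ν^P = ν`, i.e. `ν` is time-invariant. -/
theorem stmt_13 {S : Type*} [Fintype S] [Nonempty S]
    [MeasurableSpace S] [MeasurableSingletonClass S]
    {d : ℕ} (hd : 0 < d)
    (T : (Fin d → ℤ) → ((Fin d → ℤ) → S) → ((Fin d → ℤ) → S))
    (hT : ∀ m x z, T m x z = x (z + m))
    (P : Kernel ((Fin d → ℤ) → S) ((Fin d → ℤ) → S)) [IsMarkovKernel P]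
    (N : (Fin d → ℤ) → Finset (Fin d → ℤ)) (hN : ∀ z, z ∈ N z)
    (hDfin : ∀ z, {z' | z ∈ N z'}.Finite)
    (Pz : (Fin d → ℤ) → ((Fin d → ℤ) → S) → S → ENNReal)
    (hloc : ∀ z x y s, (∀ w ∈ N z, x w = y w) → Pz z x s = Pz z y s)
    (hpos : ∀ z x s, 0 < Pz z x s)
    (hsync : ∀ (x : (Fin d → ℤ) → S) (Φ : Finset (Fin d → ℤ)) (v : (Fin d → ℤ) → S),
      P x {y | ∀ z ∈ Φ, y z = v z} = ∏ z ∈ Φ, Pz z x (v z))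
    (hshiftP : ∀ (x : (Fin d → ℤ) → S) (A : Set ((Fin d → ℤ) → S)) (m : Fin d → ℤ),
      P x A = P (T m x) (T m '' A))
    (ν : Measure ((Fin d → ℤ) → S)) [IsProbabilityMeasure ν]
    (hνshift : ∀ (m : Fin d → ℤ) (A : Set ((Fin d → ℤ) → S)), ν (T m '' A) = ν A)
    (νP : Measure ((Fin d → ℤ) → S)) [IsProbabilityMeasure νP]
    (hνP : ∀ A : Set ((Fin d → ℤ) → S), MeasurableSet A → νP A = ∫⁻ x, P x A ∂ν)
    (hlemma : Tendsto (fun n : ℕ =>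
        ⨆ A : {A : Set ((Fin d → ℤ) → S) //
            MeasurableSet[coordSigma {z : Fin d → ℤ | ¬ (∑ i, |z i| ≤ (n : ℤ))}] A},
          |(νP A).toReal - (ν A).toReal|) atTop (nhds 0)) :
    νP = ν := by
  -- basic facts about the shift
  have hTfun : ∀ m : Fin d → ℤ, T m = fun (x : (Fin d → ℤ) → S) z => x (z + m) := by
    intro m; funext x z; exact hT m x z
  have hmeasT : ∀ m : Fin d → ℤ, Measurable (T m) := by
    intro m; rw [hTfun m]
    exact measurable_pi_lambda _ fun z => measurable_pi_apply _
  have h1 : ∀ (m : Fin d → ℤ) (x : (Fin d → ℤ) → S), T (-m) (T m x) = x := by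
    intro m x; funext z; rw [hT, hT]; congr 1; abel
  have h2 : ∀ (m : Fin d → ℤ) (x : (Fin d → ℤ) → S), T m (T (-m) x) = x := by
    intro m x; funext z; rw [hT, hT]; congr 1; abel
  have himg : ∀ (m : Fin d → ℤ) (A : Set ((Fin d → ℤ) → S)),
      T m '' A = T (-m) ⁻¹' A := by
    intro m A; ext y
    constructor
    · rintro ⟨x, hx, rfl⟩
      simpa [Set.mem_preimage, h1 m x] using hx
    · intro hy
      exact ⟨T (-m) y, hy, h2 m y⟩
  -- ν is invariant under T m as a map
  have hmap : ∀ m : Fin d → ℤ, ν.map (T m) = ν := by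
    intro m
    refine Measure.ext fun A hA => ?_
    rw [Measure.map_apply (hmeasT m) hA]
    have : T m ⁻¹' A = T (-m) '' A := by rw [himg (-m) A, neg_neg]
    rw [this, hνshift]
  -- νP is shift-invariant
  have hνPshift : ∀ (m : Fin d → ℤ) (A : Set ((Fin d → ℤ) → S)),
      MeasurableSet A → νP (T m '' A) = νP A := by
    intro m A hA
    have hA' : MeasurableSet (T m '' A) := by
      rw [himg]; exact hmeasT (-m) hA
    calc νP (T m '' A) = ∫⁻ x, P x (T m '' A) ∂ν := hνP _ hA'
      _ = ∫⁻ x, P (T m x) (T m '' A) ∂ν := by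
          conv_lhs => rw [← hmap m]
          rw [lintegral_map (P.measurable_coe hA') (hmeasT m)]
      _ = ∫⁻ x, P x A ∂ν := by
          refine lintegral_congr fun x => ?_
          exact (hshiftP x A m).symm
      _ = νP A := (hνP A hA).symm
  -- the sup is bounded by 1
  have hbdd : ∀ n : ℕ, BddAbove (Set.range (fun A : {A : Set ((Fin d → ℤ) → S) //
      MeasurableSet[coordSigma {z : Fin d → ℤ | ¬ (∑ i, |z i| ≤ (n : ℤ))}] A} =>
      |(νP A).toReal - (ν A).toReal|)) := by
    intro n
    refine ⟨1, ?_⟩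
    rintro x ⟨⟨A, hA⟩, rfl⟩
    have hx1 : (νP A).toReal ≤ 1 := by
      have := (ENNReal.toReal_le_toReal (measure_ne_top νP A) ENNReal.one_ne_top).2
        (prob_le_one (μ := νP) (s := A))
      simpa using this
    have hy1 : (ν A).toReal ≤ 1 := by
      have := (ENNReal.toReal_le_toReal (measure_ne_top ν A) ENNReal.one_ne_top).2
        (prob_le_one (μ := ν) (s := A))
      simpa using this
    have hx0 : 0 ≤ (νP A).toReal := ENNReal.toReal_nonneg
    have hy0 : 0 ≤ (ν A).toReal := ENNReal.toReal_nonneg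
    rw [abs_le]; constructor <;> linarith
  -- main extensionality argument
  refine ext_of_generate_finite (measurableCylinders (fun _ : Fin d → ℤ => S))
    generateFrom_measurableCylinders.symm isPiSystem_measurableCylinders ?_ (by simp)
  intro A hA
  obtain ⟨s, Sset, hSm, rfl⟩ := (mem_measurableCylinders A).1 hA
  have hAmeas : MeasurableSet (cylinder s Sset) :=
    MeasurableSet.of_mem_measurableCylinders (α := fun _ : Fin d → ℤ => S) hA
  have hAcs : MeasurableSet[coordSigma (↑s : Set (Fin d → ℤ))] (cylinder s Sset) :=
    cylinder_measurable_coordSigma s hSm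
  -- the key bound for each n
  have key : ∀ n : ℕ,
      |(νP (cylinder s Sset)).toReal - (ν (cylinder s Sset)).toReal| ≤
      ⨆ A : {A : Set ((Fin d → ℤ) → S) //
          MeasurableSet[coordSigma {z : Fin d → ℤ | ¬ (∑ i, |z i| ≤ (n : ℤ))}] A},
        |(νP A).toReal - (ν A).toReal| := by
    intro n
    set i0 : Fin d := ⟨0, hd⟩ with hi0
    set c : ℤ := (n : ℤ) + 1 + ∑ z ∈ s, |z i0| with hc
    set m : Fin d → ℤ := fun j => if j = i0 then c else 0 with hm
    have hf : ∀ z ∈ (↑s : Set (Fin d → ℤ)),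
        z + (-m) ∈ {z : Fin d → ℤ | ¬ (∑ i, |z i| ≤ (n : ℤ))} := by
      intro z hz
      simp only [Set.mem_setOf_eq, not_le]
      have h1' : |(z + (-m)) i0| ≤ ∑ i, |(z + (-m)) i| :=
        Finset.single_le_sum (f := fun i => |(z + (-m)) i|)
          (fun i _ => abs_nonneg _) (Finset.mem_univ i0)
      have h2' : |z i0| ≤ ∑ w ∈ s, |w i0| :=
        Finset.single_le_sum (f := fun w => |w i0|)
          (fun w _ => abs_nonneg _) (Finset.mem_coe.mp hz)
      have hmi0 : m i0 = c := by simp [hm]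
      have hzm : (z + (-m)) i0 = z i0 - c := by
        simp only [Pi.add_apply, Pi.neg_apply, hmi0, sub_eq_add_neg]
      have h3' : c - z i0 ≤ |(z + (-m)) i0| := by
        rw [hzm]
        have := neg_abs_le (z i0 - c)
        linarith
      have h4' : z i0 ≤ |z i0| := le_abs_self _
      linarith
    set A' : Set ((Fin d → ℤ) → S) := T m '' cylinder s Sset with hA'def
    have hA'cs : MeasurableSet[coordSigma
        {z : Fin d → ℤ | ¬ (∑ i, |z i| ≤ (n : ℤ))}] A' := by
      rw [hA'def, himg m]
      have hTneg : T (-m) = fun (x : (Fin d → ℤ) → S) z => x (z + (-m)) := hTfun (-m)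
      rw [hTneg]
      exact measurable_coordSigma_precomp hf hAcs
    have hνPeq : νP A' = νP (cylinder s Sset) := hνPshift m _ hAmeas
    have hνeq : ν A' = ν (cylinder s Sset) := hνshift m _
    have := le_ciSup (hbdd n) (⟨A', hA'cs⟩ : {A : Set ((Fin d → ℤ) → S) //
        MeasurableSet[coordSigma {z : Fin d → ℤ | ¬ (∑ i, |z i| ≤ (n : ℤ))}] A})
    simpa [hνPeq, hνeq] using this
  -- conclude
  have hle : |(νP (cylinder s Sset)).toReal - (ν (cylinder s Sset)).toReal| ≤ 0 :=
    ge_of_tendsto hlemma (Filter.Eventually.of_forall key)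
  have heq : (νP (cylinder s Sset)).toReal = (ν (cylinder s Sset)).toReal := by
    have hnn := abs_nonneg ((νP (cylinder s Sset)).toReal - (ν (cylinder s Sset)).toReal)
    have h0 : |(νP (cylinder s Sset)).toReal - (ν (cylinder s Sset)).toReal| = 0 :=
      le_antisymm hle hnn
    have := abs_eq_zero.mp h0
    linarith
  exact (ENNReal.toReal_eq_toReal_iff' (measure_ne_top νP _) (measure_ne_top ν _)).1 heq
end

section
/- Let $\Gamma = S^W$ with $S$ finite and $W$ countable, and let $P$ satisfy the PCA assumptions (A1), (A2), (A4). Then for every finite $\Phi \subset W$ and every set $A$ measurable with respect to the coordinates in $W \setminus \Phi_0$, where $\Phi_0 = \bigcup_{y\in\Phi} D(y)$, the function $x \mapsto P(x, A)$ is measurable with respect to the coordinates in $W\setminus\Phi$. Consequently, for every $A$ in the spatial tail $\sigma$-algebra $\widehat{\mathcal{B}} = \bigcap_{\Phi\text{ finite}}\mathcal{B}_{W\setminus\Phi}$, the map $x \mapsto P(x,A)$ is $\widehat{\mathcal{B}}$-measurable. -/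
open MeasureTheory ProbabilityTheory
open scoped Classical

section Aux

variable {S W : Type*} [MeasurableSpace S]

lemma coordSigma_le_pi (Ψ : Set W) :
    coordSigma (S := S) Ψ ≤ MeasurableSpace.pi :=
  iSup₂_le fun z _ => (measurable_pi_apply z).comap_le

lemma coordSigma_mono {Ψ Ψ' : Set W} (h : Ψ ⊆ Ψ') :
    coordSigma (S := S) Ψ ≤ coordSigma Ψ' :=
  iSup₂_le fun z hz =>
    le_iSup₂ (f := fun z (_ : z ∈ Ψ') =>
      MeasurableSpace.comap (fun x : W → S => x z) inferInstance) z (h hz)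

lemma measurable_eval_coordSigma {Ψ : Set W} {z : W} (hz : z ∈ Ψ) :
    Measurable[coordSigma (S := S) Ψ] (fun x : W → S => x z) := by
  rw [measurable_iff_comap_le]
  exact le_iSup₂ (f := fun z (_ : z ∈ Ψ) =>
      MeasurableSpace.comap (fun x : W → S => x z) inferInstance) z hz

/-- A function that depends only on the coordinates in a finite set `Ψ ⊆ C`
is `coordSigma C`-measurable. -/
lemma measurable_of_depends [Fintype S] [Nonempty S] [MeasurableSingletonClass S]
    {C : Set W} (Ψ : Finset W) (hΨ : ↑Ψ ⊆ C) (f : (W → S) → ENNReal)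
    (hf : ∀ x y : W → S, (∀ w ∈ Ψ, x w = y w) → f x = f y) :
    Measurable[coordSigma C] f := by
  classical
  let r : (W → S) → (Ψ → S) := fun x w => x ↑w
  have hr : Measurable[coordSigma C] r :=
    (@measurable_pi_iff _ _ _ (coordSigma C) _ r).mpr fun w =>
      measurable_eval_coordSigma (hΨ w.2)
  let g : (Ψ → S) → ENNReal := fun u =>
    f (fun w => if h : w ∈ Ψ then u ⟨w, h⟩ else Classical.arbitrary S)
  have hg : Measurable g := measurable_of_countable g
  have hfg : f = g ∘ r := by
    funext x
    refine hf x _ fun w hw => ?_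
    simp [r, hw]
  rw [hfg]
  exact hg.comp hr

end Aux

/-- Föllmer's measurability lemma, first part of Theorem 1:
under (A1), (A2), (A4), for every finite `Φ ⊆ W` and every set `A` measurable
w.r.t. the coordinates in `W ∖ Φ₀` (where `Φ₀ = ⋃_{y∈Φ} D(y)`), the map
`x ↦ P(x,A)` is measurable w.r.t. the coordinates in `W ∖ Φ`; consequently for
every `A` in the spatial tail σ-algebra, `x ↦ P(x,A)` is tail-measurable. -/
theorem stmt_18 {S W : Type*} [Fintype S] [Nonempty S] [Countable W]
    [MeasurableSpace S] [MeasurableSingletonClass S]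
    (P : Kernel (W → S) (W → S)) [IsMarkovKernel P]
    (N : W → Finset W) (hN : ∀ z, z ∈ N z)
    (hDfin : ∀ z : W, {z' : W | z ∈ N z'}.Finite)
    (Pz : W → (W → S) → S → ENNReal)
    (hloc : ∀ (z : W) (x y : W → S) (s : S), (∀ w ∈ N z, x w = y w) → Pz z x s = Pz z y s)
    (hsync : ∀ (x : W → S) (Φ : Finset W) (v : W → S),
      P x {y | ∀ z ∈ Φ, y z = v z} = ∏ z ∈ Φ, Pz z x (v z)) :
    (∀ (Φ : Finset W) (A : Set (W → S)),
      MeasurableSet[coordSigma {z : W | ∀ y ∈ Φ, y ∉ N z}] A →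
      Measurable[coordSigma ((↑Φ : Set W)ᶜ)] (fun x => P x A))
    ∧ (∀ A : Set (W → S),
      MeasurableSet[⨅ Φ' : Finset W, coordSigma ((↑Φ' : Set W)ᶜ)] A →
      Measurable[⨅ Φ' : Finset W, coordSigma ((↑Φ' : Set W)ᶜ)] (fun x => P x A)) := by
  classical
  have main : ∀ (Φ : Finset W) (A : Set (W → S)),
      MeasurableSet[coordSigma {z : W | ∀ y ∈ Φ, y ∉ N z}] A →
      Measurable[coordSigma ((↑Φ : Set W)ᶜ)] (fun x => P x A) := by
    intro Φ
    set T : Set W := {z : W | ∀ y ∈ Φ, y ∉ N z} with hT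
    -- cylinders on finite subsets of T
    set cyls : Set (Set (W → S)) :=
      {A | ∃ (Ψ : Finset W) (v : W → S), ↑Ψ ⊆ T ∧ A = {y | ∀ z ∈ Ψ, y z = v z}} with hcyls
    have hgen : coordSigma (S := S) T = MeasurableSpace.generateFrom cyls := by
      apply le_antisymm
      · refine iSup₂_le fun z hz => ?_
        rw [MeasurableSpace.comap_le_iff_le_map]
        intro B _
        -- preimage of B under eval z is a finite union of cylinders
        have : (fun x : W → S => x z) ⁻¹' B = ⋃ s ∈ B, {y : W → S | ∀ w ∈ ({z} : Finset W), y w = s} := by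
          ext x
          simp [Set.mem_preimage, Set.mem_iUnion]
        show MeasurableSet[MeasurableSpace.generateFrom cyls] ((fun x : W → S => x z) ⁻¹' B)
        rw [this]
        refine MeasurableSet.biUnion (Set.to_countable _) fun s _ => ?_
        refine MeasurableSpace.measurableSet_generateFrom ?_
        exact ⟨{z}, fun _ => s, by simpa using hz, rfl⟩
      · refine MeasurableSpace.generateFrom_le fun A hA => ?_
        obtain ⟨Ψ, v, hΨ, rfl⟩ := hA
        have : {y : W → S | ∀ z ∈ Ψ, y z = v z} = ⋂ z ∈ Ψ, (fun y : W → S => y z) ⁻¹' {v z} := by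
          ext y; simp
        rw [this]
        refine MeasurableSet.biInter (Set.to_countable _) fun z hz => ?_
        exact (measurable_eval_coordSigma (S := S) (hΨ hz)) (measurableSet_singleton (v z))
    have hpi : IsPiSystem cyls := by
      rintro A₁ ⟨Ψ₁, v₁, hΨ₁, rfl⟩ A₂ ⟨Ψ₂, v₂, hΨ₂, rfl⟩ hne
      obtain ⟨w, hw₁, hw₂⟩ := hne
      refine ⟨Ψ₁ ∪ Ψ₂, fun z => if z ∈ Ψ₁ then v₁ z else v₂ z, ?_, ?_⟩
      · intro z hz
        rcases Finset.mem_union.mp (by exact_mod_cast hz) with h | h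
        exacts [hΨ₁ h, hΨ₂ h]
      · ext y
        constructor
        · rintro ⟨h₁, h₂⟩ z hz
          rcases Finset.mem_union.mp hz with h | h
          · simp [h, h₁ z h]
          · by_cases h' : z ∈ Ψ₁
            · simp [h', h₁ z h']
            · simp [h', h₂ z h]
        · intro h
          constructor
          · intro z hz
            have := h z (Finset.mem_union_left _ hz)
            simpa [hz] using this
          · intro z hz
            have := h z (Finset.mem_union_right _ hz)
            by_cases h' : z ∈ Ψ₁
            · have e : v₁ z = v₂ z := by rw [← hw₁ z h', hw₂ z hz]
              simpa [h', e] using this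
            · simpa [h'] using this
    -- the predicate
    intro A hA
    refine @MeasurableSpace.induction_on_inter _ (coordSigma T) (fun A _ =>
        Measurable[coordSigma ((↑Φ : Set W)ᶜ)] (fun x => P x A)) _
      hgen hpi ?_ ?_ ?_ ?_ _ hA
    · simp [measurable_const (a := (0 : ENNReal))]
    · rintro A ⟨Ψ, v, hΨ, rfl⟩
      have : (fun x => P x {y | ∀ z ∈ Ψ, y z = v z})
          = fun x => ∏ z ∈ Ψ, Pz z x (v z) := by
        funext x; exact hsync x Ψ v
      rw [this]
      refine Finset.measurable_prod _ fun z hz => ?_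
      -- Pz z · (v z) depends only on coords in N z ⊆ Φᶜ
      have hNz : ↑(N z) ⊆ ((↑Φ : Set W)ᶜ) := by
        intro w hw
        intro hwΦ
        exact hΨ hz w hwΦ hw
      exact measurable_of_depends (N z) hNz _ (fun x y h => hloc z x y (v z) h)
    · intro A hAm hAmeas
      have hAm' : MeasurableSet A := coordSigma_le_pi (S := S) T A hAm
      have : (fun x => P x Aᶜ) = fun x => 1 - P x A := by
        funext x
        rw [measure_compl hAm' (measure_ne_top _ _), measure_univ]
      rw [this]
      exact Measurable.const_sub hAmeas 1
    · intro f hdisj hfm hfmeas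
      have hfm' : ∀ i, MeasurableSet (f i) := fun i => coordSigma_le_pi (S := S) T (f i) (hfm i)
      have : (fun x => P x (⋃ i, f i)) = fun x => ∑' i, P x (f i) := by
        funext x
        exact measure_iUnion hdisj hfm'
      rw [this]
      exact Measurable.ennreal_tsum hfmeas
  refine ⟨main, fun A hA => ?_⟩
  have hA' : ∀ Φ' : Finset W, MeasurableSet[coordSigma ((↑Φ' : Set W)ᶜ)] A :=
    fun Φ' => (MeasurableSpace.measurableSet_iInf.mp hA) Φ'
  rw [measurable_iff_comap_le]
  refine le_iInf fun Φ => ?_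
  rw [← measurable_iff_comap_le]
  -- A is measurable w.r.t. coordinates outside Φ₀
  set Φ₀ : Finset W := Φ.biUnion (fun y => (hDfin y).toFinset) with hΦ₀
  have hTeq : ((↑Φ₀ : Set W)ᶜ) = {z : W | ∀ y ∈ Φ, y ∉ N z} := by
    ext z
    simp [hΦ₀, Finset.mem_biUnion, Set.Finite.mem_toFinset]
  exact main Φ A (by rw [← hTeq]; exact hA' Φ₀)
end
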